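/- For all k,n ∈ ℕ with k ≤ n, the two-dimensional rectangular grid G_{k,n} = ([0,k]∩ℤ) × ([0,n]∩ℤ), equipped with the ℓ1 metric, is (k+5)-TSP-efficient. -/

import Mathlib

open Metric Set
open scoped Classical ENNReal NNReal

noncomputable section

/-- The underlying set of the lamplighter space over `X`: a lamp configuration
(a finite set of lit lamps) together with the position of the lamplighter. -/
abbrev Lamp (X : Type*) := Finset X × X

namespace Lamplighter

variable {X Y Z : Type*}

/-- The length of the path visiting the points of a list in order,
with respect to the distance function `d`. -/
def pathLength (d : X → X → ℝ) : List X → ℝ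
  | [] => 0
  | [_] => 0
  | x :: y :: l => d x y + pathLength d (y :: l)

/-- The symmetric difference of the lamp configurations of `p` and `q`, as a set. -/
def sd (p q : Lamp X) : Set X :=
  ((p.1 : Set X) \ (q.1 : Set X)) ∪ ((q.1 : Set X) \ (p.1 : Set X))

/-- The traveling salesman semimetric on the lamplighter space:
the infimum of lengths of finite paths starting at `p.2`, ending at `q.2`, and
visiting every point of the symmetric difference of the configurations. -/
def TSP (d : X → X → ℝ) (p q : Lamp X) : ℝ :=
  sInf { s : ℝ | ∃ l : List X, l.head? = some p.2 ∧ l.getLast? = some q.2 ∧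
    (∀ a ∈ sd p q, a ∈ l) ∧ s = pathLength d l }

/-- The diameter (in `ℝ≥0∞`) of a set with respect to a distance function `d`. -/
def ediamD (d : X → X → ℝ) (A : Set X) : ℝ≥0∞ :=
  ⨆ x ∈ A, ⨆ y ∈ A, ENNReal.ofReal (d x y)

/-- The traveling salesman shortcut semimetric:
`TSCP((A,x),(B,y)) = diam({x,y} ∪ (A Δ B))`. -/
def TSCP (d : X → X → ℝ) (p q : Lamp X) : ℝ :=
  (ediamD d ({p.2, q.2} ∪ sd p q)).toReal

/-- `ρ((A,x),(B,y))` is `0` if `A = B` and `1` otherwise. -/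
def rho (p q : Lamp X) : ℝ := if p.1 = q.1 then 0 else 1

/-- The lamplighter metric `d_La = TSP + ρ`. -/
def dLa (d : X → X → ℝ) (p q : Lamp X) : ℝ := TSP d p q + rho p q

/-- `X` is `K`-TSP-efficient if `TSP ≤ K • TSCP` on `La(X)²`. -/
def TSPEfficient (d : X → X → ℝ) (K : ℝ) : Prop :=
  ∀ p q : Lamp X, TSP d p q ≤ K * TSCP d p q

/-- A weak `C`-biLipschitz embedding between spaces with distance functions `dY`, `dZ`:
a family of maps `φ t : Y → Z` (for `t > 0`) such that each `φ t` is `σ t`-Lipschitz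
and `dY x y ≥ C*t` implies `dZ (φ t x) (φ t y) ≥ t * σ t`. -/
def WeakBiLip (dY : Y → Y → ℝ) (dZ : Z → Z → ℝ) (C : ℝ) : Prop :=
  ∃ φ : ℝ → Y → Z, ∀ t : ℝ, 0 < t → ∃ σ : ℝ, 0 < σ ∧
    (∀ x y : Y, dZ (φ t x) (φ t y) ≤ σ * dY x y) ∧
    (∀ x y : Y, C * t ≤ dY x y → t * σ ≤ dZ (φ t x) (φ t y))

/-- `f` is a `C`-biLipschitz embedding (an injective map of biLipschitz
distortion at most `C`, allowing an overall scaling factor `s`). -/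
def BiLipWith (dY : Y → Y → ℝ) (dZ : Z → Z → ℝ) (C : ℝ) (f : Y → Z) : Prop :=
  Function.Injective f ∧ ∃ s : ℝ, 0 < s ∧
    ∀ x y : Y, s * dY x y ≤ dZ (f x) (f y) ∧ dZ (f x) (f y) ≤ C * s * dY x y

/-- Nagata dimension at most `n` with constant at most `γ`: for every scale `s > 0`
there is a covering by sets of diameter at most `γ s` such that every set of diameter
less than `s` meets at most `n + 1` members of the covering. -/
def NagataDimD (d : Y → Y → ℝ) (n : ℕ) (γ : ℝ) : Prop :=
  ∀ s : ℝ, 0 < s → ∃ B : Set (Set Y),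
    (∀ y : Y, ∃ b ∈ B, y ∈ b) ∧
    (∀ b ∈ B, ediamD d b ≤ ENNReal.ofReal (γ * s)) ∧
    (∀ A : Set Y, ediamD d A < ENNReal.ofReal s →
      {b | b ∈ B ∧ (b ∩ A).Nonempty}.encard ≤ ((n : ℕ∞) + 1))

/-- Markov type 2 with constant `M`, for the distance function `d`: for every stationary
reversible Markov chain on a finite state space (given by a stationary distribution `μ`
and a reversible stochastic transition matrix `P`), every map `f` into the space, and
every time `t`, `E[d(f(Z_t),f(Z_0))²] ≤ M² t E[d(f(Z_1),f(Z_0))²]`. -/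
def HasMarkovType2 (d : Y → Y → ℝ) (M : ℝ) : Prop :=
  ∀ (n : ℕ) (μ : Fin n → ℝ) (P : Matrix (Fin n) (Fin n) ℝ),
    (∀ i, 0 ≤ μ i) → (∑ i, μ i) = 1 →
    (∀ i j, 0 ≤ P i j) → (∀ i, (∑ j, P i j) = 1) →
    (∀ i j, μ i * P i j = μ j * P j i) →
    ∀ (f : Fin n → Y) (t : ℕ),
      (∑ i, ∑ j, μ i * (P ^ t) i j * d (f i) (f j) ^ 2) ≤
        M ^ 2 * t * ∑ i, ∑ j, μ i * P i j * d (f i) (f j) ^ 2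

/-- `D`-doubling: every ball of radius `r` can be covered by `D` balls of radius `r/2`. -/
def Doubling (d : Y → Y → ℝ) (D : ℕ) : Prop :=
  ∀ r : ℝ, 0 < r → ∀ x : Y, ∃ c : Fin D → Y,
    ∀ y : Y, d x y ≤ r → ∃ i, d (c i) y ≤ r / 2

/-- `A` is an arc from `x` to `y`: the image of an injective continuous map of `[0,1]`
sending the endpoints to `x` and `y`. -/
def IsArc {T : Type*} [MetricSpace T] (x y : T) (A : Set T) : Prop :=
  ∃ γ : ℝ → T, ContinuousOn γ (Icc 0 1) ∧ InjOn γ (Icc 0 1) ∧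
    γ 0 = x ∧ γ 1 = y ∧ γ '' (Icc 0 1) = A

/-- `A` is a geodesic segment from `x` to `y`: the image of an isometric embedding
of `[0, dist x y]` sending the endpoints to `x` and `y`. -/
def IsGeodesicSeg {T : Type*} [MetricSpace T] (x y : T) (A : Set T) : Prop :=
  ∃ γ : ℝ → T, γ 0 = x ∧ γ (dist x y) = y ∧
    (∀ s ∈ Icc (0 : ℝ) (dist x y), ∀ t ∈ Icc (0 : ℝ) (dist x y),
      dist (γ s) (γ t) = |s - t|) ∧
    γ '' (Icc 0 (dist x y)) = A

/-- `T` is an ℝ-tree: any two (distinct) points are joined by a unique arc,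
and this arc is a geodesic. -/
def IsRTree (T : Type*) [MetricSpace T] : Prop :=
  ∀ x y : T, x ≠ y →
    (∃ A : Set T, IsArc x y A) ∧
    (∀ A A' : Set T, IsArc x y A → IsArc x y A' → A = A') ∧
    (∀ A : Set T, IsArc x y A → IsGeodesicSeg x y A)

/-- The sup (ℓ∞-product) distance on a finite product of metric spaces. -/
def piSupDist {n : ℕ} {T : Fin n → Type*} (I : ∀ i, MetricSpace (T i)) :
    (∀ i, T i) → (∀ i, T i) → ℝ :=
  letI := I
  fun f g => dist f g

/-- The ℓ1-product distance on a finite product of metric spaces. -/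
def piL1Dist {n : ℕ} {T : Fin n → Type*} (I : ∀ i, MetricSpace (T i)) :
    (∀ i, T i) → (∀ i, T i) → ℝ :=
  letI := I
  fun f g => ∑ i, dist (f i) (g i)

/-- The ℓ1 distance on `ℝ^m`. -/
def l1Dist (m : ℕ) (x y : Fin m → ℝ) : ℝ := ∑ i, |x i - y i|

/-- The ℓp distance on `ℝ^m`. -/
def lpDist (m : ℕ) (p : ℝ) (x y : Fin m → ℝ) : ℝ :=
  (∑ i, |x i - y i| ^ p) ^ (1 / p)

/-- The (pseudo)distance of the ℝ-star over the index type `ι`: the wedge sum of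
copies of `[0,∞)` indexed by `ι`, glued at `0`. -/
def starDist {ι : Type*} (p q : ι × ℝ≥0) : ℝ :=
  if p.1 = q.1 then |(p.2 : ℝ) - (q.2 : ℝ)| else (p.2 : ℝ) + (q.2 : ℝ)

/-- The sup (ℓ∞-product) of finitely many distance functions. -/
def supD {n : ℕ} {T : Fin n → Type*} (d : ∀ i, T i → T i → ℝ) (f g : ∀ i, T i) : ℝ :=
  ((Finset.univ.sup fun i => (d i (f i) (g i)).toNNReal : ℝ≥0) : ℝ)

/-- The infimum of distortions of biLipschitz embeddings of `(Y, dY)` into `(Z, dZ)`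
(`∞` if there is no such embedding). -/
def cEmb (dY : Y → Y → ℝ) (dZ : Z → Z → ℝ) : ℝ≥0∞ :=
  sInf { D : ℝ≥0∞ | ∃ C : ℝ, 0 < C ∧ D = ENNReal.ofReal C ∧
    ∃ f : Y → Z, BiLipWith dY dZ C f }

/-- `c_1^{m,dom}(X,d)`: the infimum of all `D > 0` such that there exist injective
`1`-Lipschitz maps `φ i : X → ℝ` and weights `α i ≥ 0` summing to `1` with
`∑ i, α i * |φ i x - φ i y| ≥ d x y / D` for all `x y` (`∞` if there is none). -/
def c1dom (d : X → X → ℝ) (m : ℕ) : ℝ≥0∞ :=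
  sInf { D : ℝ≥0∞ | ∃ C : ℝ, 0 < C ∧ D = ENNReal.ofReal C ∧
    ∃ (φ : Fin m → X → ℝ) (α : Fin m → ℝ),
      (∀ i, Function.Injective (φ i)) ∧
      (∀ i, ∀ x y : X, |φ i x - φ i y| ≤ d x y) ∧
      (∀ i, 0 ≤ α i) ∧ (∑ i, α i) = 1 ∧
      ∀ x y : X, d x y / C ≤ ∑ i, α i * |φ i x - φ i y| }

/-- The Hamming distance on the Hamming cube `{0,1}^M`, as a real number. -/
def hamDist {M : ℕ} (x y : Fin M → Bool) : ℝ :=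
  ((Finset.univ.filter fun i => x i ≠ y i).card : ℝ)

/-- The star graph `St_{n,k}`: the one-point coalescence of `n` paths of length `k`,
realized inside `ℤ^n` as the multiples `α eᵢ` with `0 ≤ α ≤ k`. -/
def St (n k : ℕ) : Type :=
  {x : Fin n → ℤ // ∃ i : Fin n, (∀ j : Fin n, j ≠ i → x j = 0) ∧ 0 ≤ x i ∧ x i ≤ (k : ℤ)}

/-- The ℓ1 metric on the star graph `St_{n,k}`. -/
def stDist {n k : ℕ} (x y : St n k) : ℝ := ∑ j, |(x.1 j : ℝ) - (y.1 j : ℝ)|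

/-- The endpoint `k eᵢ` of the `i`-th branch of the star graph. -/
def St.endpoint {n k : ℕ} (i : Fin n) : St n k :=
  ⟨fun j => if j = i then (k : ℤ) else 0, i, fun j hj => if_neg hj, by simp, by simp⟩

/-- The cycle metric on `ℤ/nℤ`. -/
def cycDist {n : ℕ} (a b : ZMod n) : ℝ := ((min ((a - b).val) ((b - a).val) : ℕ) : ℝ)

/-- The rectangular grid `G_{k,n} = ([0,k] ∩ ℤ) × ([0,n] ∩ ℤ)`. -/
def Grid2 (k n : ℕ) : Type :=
  {p : ℤ × ℤ // 0 ≤ p.1 ∧ p.1 ≤ (k : ℤ) ∧ 0 ≤ p.2 ∧ p.2 ≤ (n : ℤ)}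

/-- The ℓ1 metric on the grid `G_{k,n}`. -/
def grid2Dist {k n : ℕ} (x y : Grid2 k n) : ℝ :=
  |(x.1.1 : ℝ) - (y.1.1 : ℝ)| + |(x.1.2 : ℝ) - (y.1.2 : ℝ)|

/-- The `m`-dimensional grid `G^m({n_i}) = ∏ i, ([0, n_i] ∩ ℤ)`. -/
def GridM (m : ℕ) (n : Fin m → ℕ) : Type :=
  {p : Fin m → ℤ // ∀ i, 0 ≤ p i ∧ p i ≤ (n i : ℤ)}

/-- The ℓ1 metric on the `m`-dimensional grid. -/
def gridMDist {m : ℕ} {n : Fin m → ℕ} (x y : GridM m n) : ℝ :=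
  ∑ i, |(x.1 i : ℝ) - (y.1 i : ℝ)|

/- auxiliary lemmas -/

lemma pathLength_nonneg' (d : X → X → ℝ) (hd : ∀ a b, 0 ≤ d a b) :
    ∀ l : List X, 0 ≤ pathLength d l
  | [] => le_refl 0
  | [_] => le_refl 0
  | x :: y :: l => add_nonneg (hd x y) (pathLength_nonneg' d hd (y :: l))

lemma pathLength_cons_cons (d : X → X → ℝ) (x y : X) (l : List X) :
    pathLength d (x :: y :: l) = d x y + pathLength d (y :: l) := rfl

lemma pathLength_concat' (d : X → X → ℝ) (a : X) :
    ∀ (l : List X) (x : X),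
      pathLength d ((x :: l) ++ [a]) =
        pathLength d (x :: l) + d ((x :: l).getLast (by simp)) a
  | [], x => by simp [pathLength]
  | y :: l, x => by
    have h := pathLength_concat' d a l y
    simp only [List.cons_append] at h ⊢
    rw [show (x :: y :: l).getLast (by simp) = (y :: l).getLast (by simp) from
      List.getLast_cons (by simp), pathLength_cons_cons, h, pathLength_cons_cons]
    ring

lemma pathLength_map_range (d : X → X → ℝ) :
    ∀ (N : ℕ) (f : ℕ → X), (∀ i : ℕ, i + 1 < N → d (f i) (f (i + 1)) = 1) →
      pathLength d ((List.range N).map f) = ((N - 1 : ℕ) : ℝ)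
  | 0, f, _ => by simp [pathLength]
  | 1, f, _ => by simp [pathLength]
  | (m + 2), f, hstep => by
    have h1 : List.range (m + 2) = 0 :: (List.range (m + 1)).map Nat.succ :=
      List.range_succ_eq_map
    have h2 : List.range (m + 1) = 0 :: (List.range m).map Nat.succ :=
      List.range_succ_eq_map
    have ih := pathLength_map_range d (m + 1) (fun i => f (i + 1))
      (fun i hi => hstep (i + 1) (by omega))
    have h3 : ((List.range (m + 1)).map Nat.succ).map f
        = (List.range (m + 1)).map (fun i => f (i + 1)) := by
      rw [List.map_map]; rfl
    have h4 : (List.range (m + 1)).map (fun i => f (i + 1))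
        = f 1 :: ((List.range m).map Nat.succ).map (fun i => f (i + 1)) := by
      rw [h2, List.map_cons]
    rw [h1, List.map_cons, h3, h4, pathLength_cons_cons, ← h4, ih, hstep 0 (by omega)]
    push_cast [Nat.add_sub_cancel]
    ring

/- the snake coordinates inside the normalized box [0,w1] × [0,w2] -/

def sU (w1 w2 : ℤ) (i : ℕ) : ℤ := min ((i : ℤ) / (w2 + 1)) w1

def sV (w2 : ℤ) (i : ℕ) : ℤ :=
  if ((i : ℤ) / (w2 + 1)) % 2 = 0 then (i : ℤ) % (w2 + 1)
  else w2 - (i : ℤ) % (w2 + 1)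

/- affine (possibly flipped) placement of [0,w] into [lo,hi] -/

def fc (lo hi : ℤ) (f : Bool) (u : ℤ) : ℤ := if f then hi - u else lo + u

lemma fc_mem (lo hi : ℤ) (f : Bool) (u : ℤ) (h0 : 0 ≤ u) (h1 : u ≤ hi - lo) :
    lo ≤ fc lo hi f u ∧ fc lo hi f u ≤ hi := by
  cases f <;> simp only [fc, Bool.false_eq_true, if_true, if_false] <;> omega

lemma fc_abs (lo hi : ℤ) (f : Bool) (u u' : ℤ) :
    |fc lo hi f u - fc lo hi f u'| = |u - u'| := by
  cases f <;> simp only [fc, Bool.false_eq_true, if_true, if_false]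
  · rw [show lo + u - (lo + u') = u - u' by ring]
  · rw [show hi - u - (hi - u') = u' - u by ring, abs_sub_comm]

lemma fc_surj (lo hi : ℤ) (f : Bool) (z : ℤ) (h1 : lo ≤ z) (h2 : z ≤ hi) :
    ∃ u : ℤ, 0 ≤ u ∧ u ≤ hi - lo ∧ fc lo hi f u = z := by
  cases f
  · exact ⟨z - lo, by omega, by omega, by simp only [fc, Bool.false_eq_true, if_false]; omega⟩
  · exact ⟨hi - z, by omega, by omega, by simp only [fc, if_true]; omega⟩

lemma fc_enter (lo hi z : ℤ) (h1 : lo ≤ z) (h2 : z ≤ hi) :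
    ∃ f : Bool, 2 * |z - fc lo hi f 0| ≤ hi - lo := by
  rcases le_or_gt (2 * z) (lo + hi) with h | h
  · refine ⟨false, ?_⟩
    simp only [fc, Bool.false_eq_true, if_false, add_zero]
    rw [abs_of_nonneg (by omega)]; omega
  · refine ⟨true, ?_⟩
    simp only [fc, if_true, sub_zero]
    rw [abs_of_nonpos (by omega)]; omega

lemma sU_bounds (w1 w2 : ℤ) (hw1 : 0 ≤ w1) (hw2 : 0 ≤ w2) (i : ℕ) :
    0 ≤ sU w1 w2 i ∧ sU w1 w2 i ≤ w1 :=
  ⟨le_min (Int.ediv_nonneg (Int.natCast_nonneg i) (by omega)) hw1, min_le_right _ _⟩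

lemma sV_bounds (w2 : ℤ) (hw2 : 0 ≤ w2) (i : ℕ) :
    0 ≤ sV w2 i ∧ sV w2 i ≤ w2 := by
  unfold sV
  have h1 : 0 ≤ (i : ℤ) % (w2 + 1) := Int.emod_nonneg _ (by omega)
  have h2 : (i : ℤ) % (w2 + 1) < w2 + 1 := Int.emod_lt_of_pos _ (by omega)
  split_ifs <;> omega

lemma sU_zero (w1 w2 : ℤ) (hw1 : 0 ≤ w1) : sU w1 w2 0 = 0 := by
  unfold sU; rw [Nat.cast_zero, Int.zero_ediv]; exact min_eq_left hw1

lemma sV_zero (w2 : ℤ) : sV w2 0 = 0 := by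
  unfold sV; norm_num

lemma snake_step (w1 w2 : ℤ) (hw1 : 0 ≤ w1) (hw2 : 0 ≤ w2) (i : ℕ)
    (hi : (i : ℤ) + 1 < (w1 + 1) * (w2 + 1)) :
    |sU w1 w2 i - sU w1 w2 (i + 1)| + |sV w2 i - sV w2 (i + 1)| = 1 := by
  set h : ℤ := w2 + 1 with hh
  have hhpos : 0 < h := by omega
  set q : ℤ := (i : ℤ) / h with hq
  set r : ℤ := (i : ℤ) % h with hr
  have hqr : h * q + r = (i : ℤ) := Int.mul_ediv_add_emod _ _
  have hr0 : 0 ≤ r := Int.emod_nonneg _ (by omega)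
  have hrh : r < h := Int.emod_lt_of_pos _ hhpos
  have hq0 : 0 ≤ q := Int.ediv_nonneg (Int.natCast_nonneg i) (by omega)
  have hqw : q ≤ w1 := by
    by_contra hcon
    push_neg at hcon
    have h2 : h * (w1 + 1) ≤ h * q := mul_le_mul_of_nonneg_left (by omega) (by omega)
    linarith
  have hcast : ((i + 1 : ℕ) : ℤ) = (i : ℤ) + 1 := by push_cast; ring
  by_cases hc : r + 1 < h
  · -- same column
    have hq' : ((i + 1 : ℕ) : ℤ) / h = q := by
      rw [hcast, show (i : ℤ) + 1 = (r + 1) + q * h by rw [← hqr]; ring,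
        Int.add_mul_ediv_right _ _ (by omega), Int.ediv_eq_zero_of_lt (by omega) hc]
      omega
    have hr' : ((i + 1 : ℕ) : ℤ) % h = r + 1 := by
      rw [hcast, show (i : ℤ) + 1 = (r + 1) + h * q by rw [← hqr]; ring,
        Int.add_mul_emod_self_left]
      exact Int.emod_eq_of_lt (by omega) hc
    have hU : sU w1 w2 i = q ∧ sU w1 w2 (i + 1) = q := by
      constructor <;> unfold sU <;> rw [← hh]
      · rw [← hq]; exact min_eq_left hqw
      · rw [hq']; exact min_eq_left hqw
    have hV : |sV w2 i - sV w2 (i + 1)| = 1 := by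
      unfold sV
      rw [← hh, ← hq, ← hr, hq', hr']
      rcases Int.emod_two_eq q with hp | hp
      · rw [if_pos hp, if_pos hp, show r - (r + 1) = -1 by ring]; norm_num
      · rw [if_neg (by omega), if_neg (by omega),
          show w2 - r - (w2 - (r + 1)) = 1 by ring]; norm_num
    rw [hU.1, hU.2, hV]; simp
  · -- next column
    have hrw : r = h - 1 := by omega
    have e1 : ((i + 1 : ℕ) : ℤ) = (q + 1) * h := by rw [hcast, ← hqr, hrw]; ring
    have hq' : ((i + 1 : ℕ) : ℤ) / h = q + 1 := by
      rw [e1]; exact Int.mul_ediv_cancel _ (by omega)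
    have hr' : ((i + 1 : ℕ) : ℤ) % h = 0 := by rw [e1]; exact Int.mul_emod_left _ _
    have hq1w : q + 1 ≤ w1 := by
      have hlt : (q + 1) * h < (w1 + 1) * h := by
        rw [← e1, hcast]; exact hi
      have := lt_of_mul_lt_mul_right hlt (by omega)
      omega
    have hU : |sU w1 w2 i - sU w1 w2 (i + 1)| = 1 := by
      unfold sU
      rw [← hh, ← hq, hq', min_eq_left hqw, min_eq_left (by omega)]
      rw [show q - (q + 1) = -1 by ring]; norm_num
    have hV : sV w2 i = sV w2 (i + 1) := by
      unfold sV
      rw [← hh, ← hq, ← hr, hq', hr']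
      rcases Int.emod_two_eq q with hp | hp
      · rw [if_pos hp, if_neg (by omega)]; omega
      · rw [if_neg (by omega), if_pos (by omega)]; omega
    rw [hU, hV]; simp

lemma snake_surj (w1 w2 : ℤ) (hw1 : 0 ≤ w1) (hw2 : 0 ≤ w2) (u v : ℤ)
    (hu0 : 0 ≤ u) (hu1 : u ≤ w1) (hv0 : 0 ≤ v) (hv1 : v ≤ w2) :
    ∃ i : ℕ, (i : ℤ) < (w1 + 1) * (w2 + 1) ∧ sU w1 w2 i = u ∧ sV w2 i = v := by
  set h : ℤ := w2 + 1 with hh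
  set r : ℤ := if u % 2 = 0 then v else w2 - v with hrdef
  have hr : 0 ≤ r ∧ r ≤ w2 := by rw [hrdef]; split_ifs <;> omega
  have hnn : 0 ≤ u * h + r := by
    have := mul_nonneg hu0 (show (0:ℤ) ≤ h by omega)
    omega
  refine ⟨(u * h + r).toNat, ?_, ?_, ?_⟩
  · rw [Int.toNat_of_nonneg hnn]
    have h2 : (u + 1) * h ≤ (w1 + 1) * h :=
      mul_le_mul_of_nonneg_right (by omega) (by omega)
    nlinarith
  · unfold sU
    rw [← hh, Int.toNat_of_nonneg hnn, show u * h + r = r + u * h by ring,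
      Int.add_mul_ediv_right _ _ (by omega), Int.ediv_eq_zero_of_lt (by omega) (by omega)]
    rw [zero_add]; exact min_eq_left hu1
  · unfold sV
    have hdiv : (u * h + r) / h = u := by
      rw [show u * h + r = r + u * h by ring,
        Int.add_mul_ediv_right _ _ (by omega), Int.ediv_eq_zero_of_lt (by omega) (by omega)]
      ring
    have hmod : (u * h + r) % h = r := by
      rw [show u * h + r = r + h * u by ring, Int.add_mul_emod_self_left]
      exact Int.emod_eq_of_lt (by omega) (by omega)
    rw [← hh, Int.toNat_of_nonneg hnn, hdiv, hmod, hrdef]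
    rcases Int.emod_two_eq u with hp | hp
    · rw [if_pos hp, if_pos hp]
    · rw [if_neg (by omega), if_neg (by omega)]; omega

lemma pathLength_sandwich (d : X → X → ℝ) (x y a : X) (l : List X) :
    pathLength d ((x :: (a :: l)) ++ [y]) =
      d x a + pathLength d (a :: l) + d ((a :: l).getLast (by simp)) y := by
  rw [pathLength_concat', pathLength_cons_cons, List.getLast_cons (by simp)]

/-- For all `k ≤ n`, the two-dimensional rectangular grid
`G_{k,n} = ([0,k] ∩ ℤ) × ([0,n] ∩ ℤ)` with the ℓ1 metric is `(k+5)`-TSP-efficient. -/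
theorem statement16 (k n : ℕ) (h : k ≤ n) :
    TSPEfficient (grid2Dist : Grid2 k n → Grid2 k n → ℝ) ((k : ℝ) + 5) := by
  intro p q
  have hdint : ∀ u v : Grid2 k n, grid2Dist u v
      = ((|u.1.1 - v.1.1| + |u.1.2 - v.1.2| : ℤ) : ℝ) := by
    intro u v; unfold grid2Dist; push_cast; ring
  have hd0 : ∀ u v : Grid2 k n, 0 ≤ grid2Dist u v := fun u v =>
    add_nonneg (abs_nonneg _) (abs_nonneg _)
  set S : Set (Grid2 k n) := {p.2, q.2} ∪ sd p q with hSdef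
  have hsub : sd p q ⊆ (↑p.1 ∪ ↑q.1 : Set (Grid2 k n)) := by
    intro z hz; rcases hz with hz | hz
    exacts [Or.inl hz.1, Or.inr hz.1]
  have hSfin : S.Finite :=
    (((Set.finite_singleton q.2).insert p.2)).union
      ((p.1.finite_toSet.union q.1.finite_toSet).subset hsub)
  have hxS : p.2 ∈ S := Or.inl (Set.mem_insert _ _)
  have hyS : q.2 ∈ S := Or.inl (Set.mem_insert_of_mem _ rfl)
  set F : Finset (Grid2 k n) := hSfin.toFinset with hF
  have hmemF : ∀ z, z ∈ F ↔ z ∈ S := fun z => hSfin.mem_toFinset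
  have hxF : p.2 ∈ F := (hmemF _).mpr hxS
  set Fx := F.image (fun z : Grid2 k n => z.1.1) with hFx
  set Fy := F.image (fun z : Grid2 k n => z.1.2) with hFy
  have hFxne : Fx.Nonempty := ⟨p.2.1.1, Finset.mem_image_of_mem _ hxF⟩
  have hFyne : Fy.Nonempty := ⟨p.2.1.2, Finset.mem_image_of_mem _ hxF⟩
  set xlo := Fx.min' hFxne with hxlodef
  set xhi := Fx.max' hFxne with hxhidef
  set ylo := Fy.min' hFyne with hylodef
  set yhi := Fy.max' hFyne with hyhidef
  have hxlo : ∀ z ∈ S, xlo ≤ z.1.1 := fun z hz =>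
    Finset.min'_le Fx z.1.1 (Finset.mem_image_of_mem _ ((hmemF z).mpr hz))
  have hxhi : ∀ z ∈ S, z.1.1 ≤ xhi := fun z hz =>
    Finset.le_max' Fx z.1.1 (Finset.mem_image_of_mem _ ((hmemF z).mpr hz))
  have hylo : ∀ z ∈ S, ylo ≤ z.1.2 := fun z hz =>
    Finset.min'_le Fy z.1.2 (Finset.mem_image_of_mem _ ((hmemF z).mpr hz))
  have hyhi : ∀ z ∈ S, z.1.2 ≤ yhi := fun z hz =>
    Finset.le_max' Fy z.1.2 (Finset.mem_image_of_mem _ ((hmemF z).mpr hz))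
  obtain ⟨zxl, hzxlS, hzxl⟩ : ∃ z ∈ S, z.1.1 = xlo := by
    obtain ⟨z, hz, hz'⟩ := Finset.mem_image.mp (Fx.min'_mem hFxne)
    exact ⟨z, (hmemF z).mp hz, hz'⟩
  obtain ⟨zxh, hzxhS, hzxh⟩ : ∃ z ∈ S, z.1.1 = xhi := by
    obtain ⟨z, hz, hz'⟩ := Finset.mem_image.mp (Fx.max'_mem hFxne)
    exact ⟨z, (hmemF z).mp hz, hz'⟩
  obtain ⟨zyl, hzylS, hzyl⟩ : ∃ z ∈ S, z.1.2 = ylo := by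
    obtain ⟨z, hz, hz'⟩ := Finset.mem_image.mp (Fy.min'_mem hFyne)
    exact ⟨z, (hmemF z).mp hz, hz'⟩
  obtain ⟨zyh, hzyhS, hzyh⟩ : ∃ z ∈ S, z.1.2 = yhi := by
    obtain ⟨z, hz, hz'⟩ := Finset.mem_image.mp (Fy.max'_mem hFyne)
    exact ⟨z, (hmemF z).mp hz, hz'⟩
  have h0xlo : 0 ≤ xlo := hzxl ▸ zxl.2.1
  have hkxhi : xhi ≤ (k : ℤ) := hzxh ▸ zxh.2.2.1
  have h0ylo : 0 ≤ ylo := hzyl ▸ zyl.2.2.2.1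
  have hnyhi : yhi ≤ (n : ℤ) := hzyh ▸ zyh.2.2.2.2
  have hw1 : 0 ≤ xhi - xlo := by
    have h1 := hxlo p.2 hxS; have h2 := hxhi p.2 hxS; omega
  have hw2 : 0 ≤ yhi - ylo := by
    have h1 := hylo p.2 hxS; have h2 := hyhi p.2 hxS; omega
  -- TSCP facts
  have hne_top : ediamD grid2Dist S ≠ ⊤ := by
    have hle : ediamD grid2Dist S ≤ ENNReal.ofReal ((k : ℝ) + n) := by
      unfold ediamD
      refine iSup₂_le fun u hu => iSup₂_le fun v hv => ENNReal.ofReal_le_ofReal ?_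
      rw [hdint]
      have hb : |u.1.1 - v.1.1| + |u.1.2 - v.1.2| ≤ (k : ℤ) + (n : ℤ) := by
        obtain ⟨a1, a2, a3, a4⟩ := u.2
        obtain ⟨b1, b2, b3, b4⟩ := v.2
        have e1 : |u.1.1 - v.1.1| ≤ (k : ℤ) := abs_le.mpr ⟨by omega, by omega⟩
        have e2 : |u.1.2 - v.1.2| ≤ (n : ℤ) := abs_le.mpr ⟨by omega, by omega⟩
        omega
      exact_mod_cast hb
    exact (lt_of_le_of_lt hle ENNReal.ofReal_lt_top).ne
  have hDdef : TSCP grid2Dist p q = (ediamD grid2Dist S).toReal := rfl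
  have hD0 : 0 ≤ TSCP grid2Dist p q := by rw [hDdef]; exact ENNReal.toReal_nonneg
  have hdistD : ∀ u ∈ S, ∀ v ∈ S, grid2Dist u v ≤ TSCP grid2Dist p q := by
    intro u hu v hv
    have h1 : ENNReal.ofReal (grid2Dist u v) ≤ ediamD grid2Dist S := by
      unfold ediamD
      have h2 : ENNReal.ofReal (grid2Dist u v)
          ≤ ⨆ v' ∈ S, ENNReal.ofReal (grid2Dist u v') :=
        le_iSup₂ (f := fun v' (_ : v' ∈ S) => ENNReal.ofReal (grid2Dist u v')) v hv
      exact h2.trans (le_iSup₂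
        (f := fun u' (_ : u' ∈ S) => ⨆ v' ∈ S, ENNReal.ofReal (grid2Dist u' v')) u hu)
    have h3 := ENNReal.toReal_mono hne_top h1
    rw [ENNReal.toReal_ofReal (hd0 u v)] at h3
    rw [hDdef]; exact h3
  have habs2 : ∀ u v : Grid2 k n,
      ((|u.1.1 - v.1.1| + |u.1.2 - v.1.2| : ℤ) : ℝ) ≤ TSCP grid2Dist p q →
      True := fun _ _ _ => trivial
  have hw1D : ((xhi - xlo : ℤ) : ℝ) ≤ TSCP grid2Dist p q := by
    have hd := hdistD zxl hzxlS zxh hzxhS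
    rw [hdint] at hd
    refine le_trans ?_ hd
    have hi : (xhi - xlo : ℤ) ≤ |zxl.1.1 - zxh.1.1| + |zxl.1.2 - zxh.1.2| := by
      have h1 := le_abs_self (zxh.1.1 - zxl.1.1)
      rw [abs_sub_comm] at h1
      have h2 := abs_nonneg (zxl.1.2 - zxh.1.2)
      omega
    exact_mod_cast hi
  have hw2D : ((yhi - ylo : ℤ) : ℝ) ≤ TSCP grid2Dist p q := by
    have hd := hdistD zyl hzylS zyh hzyhS
    rw [hdint] at hd
    refine le_trans ?_ hd
    have hi : (yhi - ylo : ℤ) ≤ |zyl.1.1 - zyh.1.1| + |zyl.1.2 - zyh.1.2| := by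
      have h1 := le_abs_self (zyh.1.2 - zyl.1.2)
      rw [abs_sub_comm] at h1
      have h2 := abs_nonneg (zyl.1.1 - zyh.1.1)
      omega
    exact_mod_cast hi
  have hw1k : ((xhi - xlo : ℤ) : ℝ) ≤ (k : ℝ) := by exact_mod_cast (by omega : xhi - xlo ≤ (k:ℤ))
  -- flips
  obtain ⟨fx, hfx⟩ := fc_enter xlo xhi p.2.1.1 (hxlo _ hxS) (hxhi _ hxS)
  obtain ⟨fy, hfy⟩ := fc_enter ylo yhi p.2.1.2 (hylo _ hxS) (hyhi _ hxS)
  -- the snake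
  set N : ℕ := ((xhi - xlo + 1) * (yhi - ylo + 1)).toNat with hNdef
  have hNcast : (N : ℤ) = (xhi - xlo + 1) * (yhi - ylo + 1) :=
    Int.toNat_of_nonneg (mul_nonneg (by omega) (by omega))
  have hN1 : 1 ≤ N := by
    have h2 : (1 : ℤ) ≤ (xhi - xlo + 1) * (yhi - ylo + 1) := by
      have := mul_le_mul (show (1:ℤ) ≤ xhi - xlo + 1 by omega)
        (show (1:ℤ) ≤ yhi - ylo + 1 by omega) (by omega) (by omega)
      linarith
    omega
  obtain ⟨f, hfval⟩ : ∃ f : ℕ → Grid2 k n, ∀ i : ℕ,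
      (f i).1.1 = fc xlo xhi fx (sU (xhi - xlo) (yhi - ylo) i) ∧
      (f i).1.2 = fc ylo yhi fy (sV (yhi - ylo) i) := by
    have hb : ∀ i : ℕ, 0 ≤ fc xlo xhi fx (sU (xhi - xlo) (yhi - ylo) i) ∧
        fc xlo xhi fx (sU (xhi - xlo) (yhi - ylo) i) ≤ (k : ℤ) ∧
        0 ≤ fc ylo yhi fy (sV (yhi - ylo) i) ∧
        fc ylo yhi fy (sV (yhi - ylo) i) ≤ (n : ℤ) := by
      intro i
      obtain ⟨hU0, hU1⟩ := sU_bounds (xhi - xlo) (yhi - ylo) hw1 hw2 i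
      obtain ⟨hV0, hV1⟩ := sV_bounds (yhi - ylo) hw2 i
      obtain ⟨hA, hB⟩ := fc_mem xlo xhi fx _ hU0 hU1
      obtain ⟨hC, hD'⟩ := fc_mem ylo yhi fy _ hV0 hV1
      exact ⟨le_trans h0xlo hA, le_trans hB hkxhi, le_trans h0ylo hC, le_trans hD' hnyhi⟩
    exact ⟨fun i => ⟨(_, _), hb i⟩, fun i => ⟨rfl, rfl⟩⟩
  have hstep : ∀ i : ℕ, i + 1 < N → grid2Dist (f i) (f (i + 1)) = 1 := by
    intro i hi
    rw [hdint, (hfval i).1, (hfval i).2, (hfval (i + 1)).1, (hfval (i + 1)).2,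
      fc_abs, fc_abs]
    have hs := snake_step (xhi - xlo) (yhi - ylo) hw1 hw2 i (by omega)
    rw [hs]; norm_num
  have hlen : pathLength grid2Dist ((List.range N).map f) = ((N - 1 : ℕ) : ℝ) :=
    pathLength_map_range _ N f hstep
  have hf0 : (f 0).1.1 = fc xlo xhi fx 0 ∧ (f 0).1.2 = fc ylo yhi fy 0 := by
    constructor
    · rw [(hfval 0).1, sU_zero _ _ hw1]
    · rw [(hfval 0).2, sV_zero]
  -- box membership of all path points
  have hboxf : ∀ i : ℕ, xlo ≤ (f i).1.1 ∧ (f i).1.1 ≤ xhi ∧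
      ylo ≤ (f i).1.2 ∧ (f i).1.2 ≤ yhi := by
    intro i
    obtain ⟨hU0, hU1⟩ := sU_bounds (xhi - xlo) (yhi - ylo) hw1 hw2 i
    obtain ⟨hV0, hV1⟩ := sV_bounds (yhi - ylo) hw2 i
    obtain ⟨hA, hB⟩ := fc_mem xlo xhi fx _ hU0 hU1
    obtain ⟨hC, hD'⟩ := fc_mem ylo yhi fy _ hV0 hV1
    rw [(hfval i).1, (hfval i).2]
    exact ⟨hA, hB, hC, hD'⟩
  -- the list
  obtain ⟨m, hm⟩ : ∃ m, N = m + 1 := ⟨N - 1, by omega⟩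
  have hrange : (List.range N).map f
      = f 0 :: ((List.range m).map Nat.succ).map f := by
    rw [hm, List.range_succ_eq_map, List.map_cons]
  set M : List (Grid2 k n) := (List.range N).map f with hM
  set L : List (Grid2 k n) := (p.2 :: M) ++ [q.2] with hLdef
  -- enter bound
  have henter : grid2Dist p.2 (f 0)
      ≤ (((xhi - xlo : ℤ) : ℝ) + ((yhi - ylo : ℤ) : ℝ)) / 2 := by
    rw [hdint, hf0.1, hf0.2]
    rw [le_div_iff₀ (by norm_num : (0:ℝ) < 2)]
    have hi : (|p.2.1.1 - fc xlo xhi fx 0| + |p.2.1.2 - fc ylo yhi fy 0|) * 2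
        ≤ (xhi - xlo) + (yhi - ylo) := by omega
    exact_mod_cast hi
  -- coverage
  have hcover : ∀ z ∈ sd p q, z ∈ L := by
    intro z hz
    have hzS : z ∈ S := Or.inr hz
    obtain ⟨u, hu0, hu1, hu2⟩ := fc_surj xlo xhi fx z.1.1 (hxlo _ hzS) (hxhi _ hzS)
    obtain ⟨v, hv0, hv1, hv2⟩ := fc_surj ylo yhi fy z.1.2 (hylo _ hzS) (hyhi _ hzS)
    obtain ⟨i, hiN, hiU, hiV⟩ := snake_surj (xhi - xlo) (yhi - ylo) hw1 hw2 u v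
      hu0 hu1 hv0 hv1
    have hfi : f i = z := by
      apply Subtype.ext
      apply Prod.ext
      · rw [(hfval i).1, hiU, hu2]
      · rw [(hfval i).2, hiV, hv2]
    have hiM : z ∈ M := by
      rw [hM]
      exact List.mem_map.mpr ⟨i, List.mem_range.mpr (by omega), hfi⟩
    rw [hLdef]
    exact List.mem_append_left _ (List.mem_cons_of_mem _ hiM)
  -- TSP bound through L
  have hTSPle : TSP grid2Dist p q ≤ pathLength grid2Dist L := by
    apply csInf_le
    · refine ⟨0, fun s hs => ?_⟩
      obtain ⟨l, _, _, _, rfl⟩ := hs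
      exact pathLength_nonneg' _ hd0 l
    · refine ⟨L, ?_, ?_, hcover, rfl⟩
      · rw [hLdef]; simp
      · rw [hLdef]; exact List.getLast?_concat
  -- compute pathLength L
  have hMne : M = f 0 :: ((List.range m).map Nat.succ).map f := by
    rw [hM]; exact hrange
  obtain ⟨g, hgM, hlenL⟩ : ∃ g : Grid2 k n, g ∈ M ∧
      pathLength grid2Dist L
        = grid2Dist p.2 (f 0) + pathLength grid2Dist M + grid2Dist g q.2 := by
    refine ⟨(f 0 :: ((List.range m).map Nat.succ).map f).getLast (by simp), ?_, ?_⟩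
    · rw [hMne]
      exact List.getLast_mem _
    · rw [hLdef, hMne]
      exact pathLength_sandwich _ _ _ _ _
  have hboxg : xlo ≤ g.1.1 ∧ g.1.1 ≤ xhi ∧ ylo ≤ g.1.2 ∧ g.1.2 ≤ yhi := by
    obtain ⟨i, _, hie⟩ := List.mem_map.mp (hM ▸ hgM)
    rw [← hie]; exact hboxf i
  have hexit : grid2Dist g q.2
      ≤ ((xhi - xlo : ℤ) : ℝ) + ((yhi - ylo : ℤ) : ℝ) := by
    rw [hdint]
    have hq1 := hxlo q.2 hyS; have hq2 := hxhi q.2 hyS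
    have hq3 := hylo q.2 hyS; have hq4 := hyhi q.2 hyS
    obtain ⟨b1, b2, b3, b4⟩ := hboxg
    have hi : |g.1.1 - q.2.1.1| + |g.1.2 - q.2.1.2|
        ≤ (xhi - xlo) + (yhi - ylo) := by
      have e1 : |g.1.1 - q.2.1.1| ≤ xhi - xlo := abs_le.mpr ⟨by omega, by omega⟩
      have e2 : |g.1.2 - q.2.1.2| ≤ yhi - ylo := abs_le.mpr ⟨by omega, by omega⟩
      omega
    exact_mod_cast hi
  -- the count
  have hcount : ((N - 1 : ℕ) : ℝ)
      = ((xhi - xlo : ℤ) : ℝ) * ((yhi - ylo : ℤ) : ℝ)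
        + ((xhi - xlo : ℤ) : ℝ) + ((yhi - ylo : ℤ) : ℝ) := by
    have hz : ((N - 1 : ℕ) : ℤ) = (xhi - xlo) * (yhi - ylo)
        + (xhi - xlo) + (yhi - ylo) := by
      rw [Nat.cast_sub hN1, hNcast]; push_cast; ring
    exact_mod_cast congrArg (Int.cast : ℤ → ℝ) hz
  -- final estimate
  have hprod : ((xhi - xlo : ℤ) : ℝ) * ((yhi - ylo : ℤ) : ℝ)
      ≤ (k : ℝ) * TSCP grid2Dist p q := by
    apply mul_le_mul hw1k hw2D
    · exact_mod_cast hw2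
    · positivity
  calc TSP grid2Dist p q ≤ pathLength grid2Dist L := hTSPle
    _ = grid2Dist p.2 (f 0) + pathLength grid2Dist M + grid2Dist g q.2 := hlenL
    _ ≤ (((xhi - xlo : ℤ) : ℝ) + ((yhi - ylo : ℤ) : ℝ)) / 2
        + (((xhi - xlo : ℤ) : ℝ) * ((yhi - ylo : ℤ) : ℝ)
          + ((xhi - xlo : ℤ) : ℝ) + ((yhi - ylo : ℤ) : ℝ))
        + (((xhi - xlo : ℤ) : ℝ) + ((yhi - ylo : ℤ) : ℝ)) := by
        rw [hlen, hcount]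
        exact add_le_add (add_le_add henter (le_refl _)) hexit
    _ ≤ ((k : ℝ) + 5) * TSCP grid2Dist p q := by nlinarith [hw1D, hw2D, hprod, hD0]

end Lamplighter
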